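/- Watson-type Borel summation produces asymptotic expansions: let B : [0,∞) → ℝ be continuous with |B(t)| ≤ C·e^{K·t} for some constants C, K ≥ 0, and suppose there exist N ∈ ℕ, real coefficients b_0, …, b_{N−1}, and constants M, δ > 0 such that |B(t) − Σ_{n=0}^{N−1} b_n t^n| ≤ M·t^N for all t ∈ [0, δ]. Then there exist C' > 0 and g₀ > 0 such that for all 0 < g < g₀: | (1/g) ∫_0^∞ e^{−t/g} B(t) dt − Σ_{n=0}^{N−1} n! · b_n · g^n | ≤ C' · g^N. -/

import Mathlib

open MeasureTheory Set Real Finset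

lemma wbs_integrable_pow (g : ℝ) (hg : 0 < g) (n : ℕ) :
    IntegrableOn (fun t : ℝ => Real.exp (-t/g) * t ^ n) (Ioi 0) := by
  have h := integrableOn_rpow_mul_exp_neg_mul_rpow (p := 1) (s := n) (b := 1/g)
    (neg_one_lt_zero.trans_le n.cast_nonneg) zero_lt_one (by positivity)
  refine (h.congr_fun (fun t ht => ?_) measurableSet_Ioi)
  beta_reduce
  rw [Real.rpow_one, Real.rpow_natCast, mul_comm]
  ring_nf

lemma wbs_integral_pow (g : ℝ) (hg : 0 < g) (n : ℕ) :
    ∫ t in Ioi (0:ℝ), Real.exp (-t/g) * t ^ n = n.factorial * g ^ (n+1) := by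
  have h := Real.integral_rpow_mul_exp_neg_mul_Ioi (a := n+1) (r := 1/g)
    (by positivity) (by positivity)
  rw [one_div_one_div] at h
  calc ∫ t in Ioi (0:ℝ), Real.exp (-t/g) * t ^ n
      = ∫ t in Ioi (0:ℝ), t ^ ((n:ℝ)+1-1) * Real.exp (-(1/g*t)) := by
        refine setIntegral_congr_fun measurableSet_Ioi (fun t ht => ?_)
        rw [show ((n:ℝ)+1-1) = (n:ℝ) by ring, Real.rpow_natCast, mul_comm]
        ring_nf
    _ = g ^ ((n:ℝ)+1) * Real.Gamma ((n:ℝ)+1) := h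
    _ = n.factorial * g ^ (n+1) := by
        rw [show ((n:ℝ)+1) = ((n+1:ℕ):ℝ) by push_cast; ring, Real.rpow_natCast,
          mul_comm]
        push_cast
        rw [Real.Gamma_nat_eq_factorial]

/-- Watson-type Borel summation produces asymptotic expansions: if
`B : [0,∞) → ℝ` is continuous with `|B(t)| ≤ C e^{Kt}`, and
`|B(t) − Σ_{n<N} b_n tⁿ| ≤ M t^N` on `[0,δ]`, then there are `C' > 0`, `g₀ > 0`
with `|(1/g) ∫_0^∞ e^{−t/g} B(t) dt − Σ_{n<N} n! b_n gⁿ| ≤ C' g^N` for all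
`0 < g < g₀`. -/
theorem watson_borel_summation
    (B : ℝ → ℝ) (hBcont : ContinuousOn B (Ici (0 : ℝ)))
    (C K : ℝ) (hC : 0 ≤ C) (hK : 0 ≤ K)
    (hBgrowth : ∀ t : ℝ, 0 ≤ t → |B t| ≤ C * Real.exp (K * t))
    (N : ℕ) (b : ℕ → ℝ) (M δ : ℝ) (hM : 0 < M) (hδ : 0 < δ)
    (hBtaylor : ∀ t ∈ Icc (0 : ℝ) δ,
      |B t - ∑ n ∈ Finset.range N, b n * t ^ n| ≤ M * t ^ N) :
    ∃ C' > (0 : ℝ), ∃ g₀ > (0 : ℝ), ∀ g : ℝ, 0 < g → g < g₀ →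
      |(1 / g) * (∫ t in Ioi (0 : ℝ), Real.exp (-t / g) * B t) -
          ∑ n ∈ Finset.range N, (n.factorial : ℝ) * b n * g ^ n|
        ≤ C' * g ^ N := by
  set K' : ℝ := max K N with hK'def
  set D : ℝ := ∑ n ∈ Finset.range N, |b n| with hDdef
  have hD : 0 ≤ D := Finset.sum_nonneg fun n _ => abs_nonneg _
  have hK' : 0 ≤ K' := le_trans hK (le_max_left _ _)
  refine ⟨M * N.factorial + 4*(C+D) * N.factorial * (2/δ)^N + 1, by positivity,
    1/(4*(K'+1)), by positivity, fun g hg hgg => ?_⟩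
  have hginv : 4*(K'+1) < 1/g := by
    rw [lt_div_iff₀ hg]
    calc 4*(K'+1)*g < 4*(K'+1)*(1/(4*(K'+1))) := by
          apply mul_lt_mul_of_pos_left hgg (by positivity)
      _ = 1 := by field_simp
  have hK'g : K' ≤ 1/(4*g) := by
    have : 4*K' ≤ 1/g := by nlinarith
    have h4 : 1/(4*g) = (1/g)/4 := by field_simp
    rw [h4]; linarith
  have hKg : K < 1/g := lt_of_le_of_lt (le_trans (le_max_left _ _) (by linarith)) hginv
  set P : ℝ → ℝ := fun t => ∑ n ∈ Finset.range N, b n * t ^ n with hPdef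
  -- integrability of exp(-t/g) * B t
  have hintB : IntegrableOn (fun t : ℝ => Real.exp (-t/g) * B t) (Ioi 0) := by
    have hmeas : AEStronglyMeasurable (fun t : ℝ => Real.exp (-t/g) * B t)
        (volume.restrict (Ioi 0)) := by
      apply ContinuousOn.aestronglyMeasurable _ measurableSet_Ioi
      have hc : Continuous fun t : ℝ => Real.exp (-t/g) :=
        Real.continuous_exp.comp ((continuous_id.neg).div_const g)
      exact hc.continuousOn.mul (hBcont.mono Ioi_subset_Ici_self)
    have hb₁ : 0 < 1/g - K := by linarith
    refine Integrable.mono' ((exp_neg_integrableOn_Ioi 0 hb₁).const_mul C) hmeas ?_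
    refine (ae_restrict_iff' measurableSet_Ioi).2 (Filter.Eventually.of_forall fun t ht => ?_)
    rw [Real.norm_eq_abs, abs_mul, abs_of_pos (Real.exp_pos _)]
    calc Real.exp (-t/g) * |B t| ≤ Real.exp (-t/g) * (C * Real.exp (K*t)) := by
          exact mul_le_mul_of_nonneg_left (hBgrowth t (le_of_lt ht)) (Real.exp_pos _).le
      _ = C * Real.exp (-(1/g - K)*t) := by
          rw [mul_left_comm, ← Real.exp_add]
          congr 1
          field_simp
          ring
  -- integrability of exp(-t/g) * P t
  have hintP : IntegrableOn (fun t : ℝ => Real.exp (-t/g) * P t) (Ioi 0) := by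
    have : IntegrableOn (fun t : ℝ => ∑ n ∈ Finset.range N,
        b n * (Real.exp (-t/g) * t ^ n)) (Ioi 0) :=
      integrable_finset_sum _ fun n _ => (wbs_integrable_pow g hg n).const_mul (b n)
    refine this.congr_fun (fun t _ => ?_) measurableSet_Ioi
    simp only [hPdef, Finset.mul_sum]
    exact Finset.sum_congr rfl fun n _ => by ring
  have hintPval : ∫ t in Ioi (0:ℝ), Real.exp (-t/g) * P t
      = ∑ n ∈ Finset.range N, b n * (n.factorial * g ^ (n+1)) := by
    rw [show (fun t : ℝ => Real.exp (-t/g) * P t)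
        = fun t : ℝ => ∑ n ∈ Finset.range N, b n * (Real.exp (-t/g) * t ^ n) by
        funext t; simp only [hPdef, Finset.mul_sum]; exact Finset.sum_congr rfl fun n _ => by ring]
    rw [integral_finset_sum _ fun n _ => (wbs_integrable_pow g hg n).const_mul (b n)]
    exact Finset.sum_congr rfl fun n _ => by rw [integral_const_mul, wbs_integral_pow g hg n]
  have hsum : ∑ n ∈ Finset.range N, (n.factorial : ℝ) * b n * g ^ n
      = (1/g) * ∫ t in Ioi (0:ℝ), Real.exp (-t/g) * P t := by
    rw [hintPval, Finset.mul_sum]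
    refine Finset.sum_congr rfl fun n _ => ?_
    field_simp
    ring
  set h : ℝ → ℝ := fun t => Real.exp (-t/g) * (B t - P t) with hhdef
  have hintH : IntegrableOn h (Ioi 0) := by
    refine (hintB.sub hintP).congr ?_
    refine (ae_restrict_iff' measurableSet_Ioi).2 (Filter.Eventually.of_forall fun t _ => ?_)
    simp only [Pi.sub_apply, hhdef]; ring
  have hkey : (1 / g) * (∫ t in Ioi (0 : ℝ), Real.exp (-t / g) * B t) -
      ∑ n ∈ Finset.range N, (n.factorial : ℝ) * b n * g ^ n
      = (1/g) * ∫ t in Set.Ioi (0:ℝ), h t := by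
    rw [hsum, ← mul_sub, ← integral_sub hintB hintP]
    congr 1
    refine setIntegral_congr_fun measurableSet_Ioi (fun t _ => ?_)
    simp only [hhdef]; ring
  have hunion : Set.Ioc (0:ℝ) δ ∪ Set.Ioi δ = Set.Ioi 0 := Ioc_union_Ioi_eq_Ioi hδ.le
  have hI1 : IntegrableOn h (Ioc 0 δ) := hintH.mono_set Ioc_subset_Ioi_self
  have hI2 : IntegrableOn h (Ioi δ) := hintH.mono_set (Ioi_subset_Ioi hδ.le)
  have hsplit : ∫ t in Set.Ioi (0:ℝ), h t = (∫ t in Set.Ioc (0:ℝ) δ, h t) + ∫ t in Set.Ioi δ, h t := by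
    rw [← hunion, setIntegral_union (Ioc_disjoint_Ioi le_rfl) measurableSet_Ioi hI1 hI2]
  -- bound on [0, δ]
  have hbound1 : |∫ t in Set.Ioc (0:ℝ) δ, h t| ≤ M * N.factorial * g ^ (N+1) := by
    have hmaj : IntegrableOn (fun t : ℝ => M * (Real.exp (-t/g) * t ^ N)) (Ioc 0 δ) :=
      ((wbs_integrable_pow g hg N).mono_set Ioc_subset_Ioi_self).const_mul M
    have h1 : ‖∫ t in Set.Ioc (0:ℝ) δ, h t‖ ≤ ∫ t in Set.Ioc (0:ℝ) δ, M * (Real.exp (-t/g) * t ^ N) := by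
      refine norm_integral_le_of_norm_le hmaj ?_
      refine (ae_restrict_iff' measurableSet_Ioc).2 (Filter.Eventually.of_forall fun t ht => ?_)
      rw [Real.norm_eq_abs, hhdef]
      simp only
      rw [abs_mul, abs_of_pos (Real.exp_pos _)]
      calc Real.exp (-t/g) * |B t - P t| ≤ Real.exp (-t/g) * (M * t ^ N) :=
            mul_le_mul_of_nonneg_left (hBtaylor t ⟨ht.1.le, ht.2⟩) (Real.exp_pos _).le
        _ = M * (Real.exp (-t/g) * t ^ N) := by ring
    have h2 : (∫ t in Set.Ioc (0:ℝ) δ, M * (Real.exp (-t/g) * t ^ N))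
        ≤ ∫ t in Set.Ioi (0:ℝ), M * (Real.exp (-t/g) * t ^ N) := by
      refine setIntegral_mono_set ((wbs_integrable_pow g hg N).const_mul M) ?_ ?_
      · refine (ae_restrict_iff' measurableSet_Ioi).2 (Filter.Eventually.of_forall fun t ht => ?_)
        have : (0:ℝ) < t := ht
        positivity
      · exact HasSubset.Subset.eventuallyLE Ioc_subset_Ioi_self
    rw [Real.norm_eq_abs] at h1
    calc |∫ t in Set.Ioc (0:ℝ) δ, h t| ≤ ∫ t in Set.Ioi (0:ℝ), M * (Real.exp (-t/g) * t ^ N) :=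
          h1.trans h2
      _ = M * N.factorial * g ^ (N+1) := by
          rw [integral_const_mul, wbs_integral_pow g hg N]; ring
  -- bound on [δ, ∞)
  have he4 : IntegrableOn (fun t : ℝ => Real.exp (-t/(4*g))) (Ioi 0) := by
    refine (wbs_integrable_pow (4*g) (by positivity) 0).congr_fun (fun t _ => ?_) measurableSet_Ioi
    simp only [pow_zero, mul_one]
  have hbound2 : |∫ t in Set.Ioi δ, h t|
      ≤ (C+D) * Real.exp (-δ/(2*g)) * (4*g) := by
    have hmaj : IntegrableOn
        (fun t : ℝ => ((C+D) * Real.exp (-δ/(2*g))) * Real.exp (-t/(4*g))) (Ioi δ) :=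
      (he4.mono_set (Ioi_subset_Ioi hδ.le)).const_mul _
    have h1 : ‖∫ t in Set.Ioi δ, h t‖
        ≤ ∫ t in Set.Ioi δ, ((C+D) * Real.exp (-δ/(2*g))) * Real.exp (-t/(4*g)) := by
      refine norm_integral_le_of_norm_le hmaj ?_
      refine (ae_restrict_iff' measurableSet_Ioi).2 (Filter.Eventually.of_forall fun t ht => ?_)
      have htδ : δ < t := ht
      have ht0 : (0:ℝ) < t := hδ.trans htδ
      rw [Real.norm_eq_abs, hhdef]
      simp only
      rw [abs_mul, abs_of_pos (Real.exp_pos _)]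
      have hPle : |P t| ≤ D * Real.exp ((N:ℝ) * t) := by
        calc |P t| ≤ ∑ n ∈ Finset.range N, |b n * t ^ n| := Finset.abs_sum_le_sum_abs _ _
          _ ≤ ∑ n ∈ Finset.range N, |b n| * Real.exp ((N:ℝ) * t) := by
              refine Finset.sum_le_sum fun n hn => ?_
              rw [abs_mul, abs_pow, abs_of_pos ht0]
              refine mul_le_mul_of_nonneg_left ?_ (abs_nonneg _)
              calc t ^ n ≤ Real.exp t ^ n := by
                    exact pow_le_pow_left₀ ht0.le
                      (by linarith [Real.add_one_le_exp t]) n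
                _ = Real.exp ((n:ℝ) * t) := by rw [← Real.exp_nat_mul]
                _ ≤ Real.exp ((N:ℝ) * t) := by
                    apply Real.exp_le_exp.2
                    have : (n:ℝ) ≤ N := Nat.cast_le.2 (Finset.mem_range.1 hn).le
                    nlinarith
          _ = D * Real.exp ((N:ℝ) * t) := by rw [← Finset.sum_mul]
      have hBP : |B t - P t| ≤ (C+D) * Real.exp (K' * t) := by
        calc |B t - P t| ≤ |B t| + |P t| := abs_sub _ _
          _ ≤ C * Real.exp (K * t) + D * Real.exp ((N:ℝ) * t) :=
              add_le_add (hBgrowth t ht0.le) hPle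
          _ ≤ C * Real.exp (K' * t) + D * Real.exp (K' * t) := by
              refine add_le_add (mul_le_mul_of_nonneg_left (Real.exp_le_exp.2 ?_) hC)
                (mul_le_mul_of_nonneg_left (Real.exp_le_exp.2 ?_) hD)
              · exact mul_le_mul_of_nonneg_right (le_max_left _ _) ht0.le
              · exact mul_le_mul_of_nonneg_right (le_max_right _ _) ht0.le
          _ = (C+D) * Real.exp (K' * t) := by ring
      calc Real.exp (-t/g) * |B t - P t|
          ≤ Real.exp (-t/g) * ((C+D) * Real.exp (K' * t)) :=
            mul_le_mul_of_nonneg_left hBP (Real.exp_pos _).le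
        _ = (C+D) * Real.exp ((K' - 1/g) * t) := by
            rw [mul_left_comm, ← Real.exp_add]
            congr 2
            field_simp
            ring
        _ ≤ (C+D) * (Real.exp (-δ/(2*g)) * Real.exp (-t/(4*g))) := by
            refine mul_le_mul_of_nonneg_left ?_ (by positivity)
            rw [← Real.exp_add]
            apply Real.exp_le_exp.2
            have h34 : (K' - 1/g) * t ≤ -(3/(4*g)) * t := by
              refine mul_le_mul_of_nonneg_right ?_ ht0.le
              have : (1:ℝ)/(4*g) = (1/g)/4 := by field_simp
              rw [this] at hK'g
              have hg4 : (3:ℝ)/(4*g) = (3/4) * (1/g) := by field_simp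
              linarith [hK'g, hg4]
            have h2' : -(3/(4*g)) * t ≤ -δ/(2*g) + -t/(4*g) := by
              have e1 : -(3/(4*g)) * t = -t/(2*g) + -t/(4*g) := by field_simp; ring
              rw [e1]
              have hmn : -t/(2*g) ≤ -δ/(2*g) := by gcongr <;> linarith
              linarith
            linarith
        _ = ((C+D) * Real.exp (-δ/(2*g))) * Real.exp (-t/(4*g)) := by ring
    have h2 : (∫ t in Set.Ioi δ, ((C+D) * Real.exp (-δ/(2*g))) * Real.exp (-t/(4*g)))
        ≤ ∫ t in Set.Ioi (0:ℝ), ((C+D) * Real.exp (-δ/(2*g))) * Real.exp (-t/(4*g)) := by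
      refine setIntegral_mono_set (he4.const_mul _) ?_ ?_
      · refine (ae_restrict_iff' measurableSet_Ioi).2 (Filter.Eventually.of_forall fun t _ => ?_)
        positivity
      · exact HasSubset.Subset.eventuallyLE (Ioi_subset_Ioi hδ.le)
    have h3 : (∫ t in Set.Ioi (0:ℝ), ((C+D) * Real.exp (-δ/(2*g))) * Real.exp (-t/(4*g)))
        = (C+D) * Real.exp (-δ/(2*g)) * (4*g) := by
      rw [integral_const_mul]
      have := wbs_integral_pow (4*g) (by positivity) 0
      simp only [pow_zero, mul_one, Nat.factorial_zero, Nat.cast_one, pow_one, one_mul] at this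
      rw [this]; ring
    rw [Real.norm_eq_abs] at h1
    calc |∫ t in Set.Ioi δ, h t| ≤ _ := h1.trans h2
      _ = (C+D) * Real.exp (-δ/(2*g)) * (4*g) := h3
  -- exponential smallness
  have hexp : Real.exp (-δ/(2*g)) ≤ N.factorial * (2/δ)^N * g^N := by
    set x : ℝ := δ/(2*g) with hxdef
    have hx : 0 < x := by positivity
    have hfac := Real.pow_div_factorial_le_exp (x := x) hx.le N
    have hxpow : 0 < x ^ N / N.factorial := by positivity
    have : Real.exp (-x) ≤ (x ^ N / N.factorial)⁻¹ := by
      rw [Real.exp_neg]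
      exact inv_anti₀ hxpow hfac
    calc Real.exp (-δ/(2*g)) = Real.exp (-x) := by rw [hxdef]; congr 1; field_simp
      _ ≤ (x ^ N / N.factorial)⁻¹ := this
      _ = N.factorial * (2/δ)^N * g^N := by
          rw [hxdef]
          have hfacpos : (0:ℝ) < N.factorial := by positivity
          field_simp
          simp only [← mul_pow]
          convert (one_pow N).symm using 2
          field_simp
  -- put everything together
  rw [hkey, hsplit, abs_mul, abs_of_pos (by positivity : (0:ℝ) < 1/g)]
  calc (1/g) * |(∫ t in Set.Ioc (0:ℝ) δ, h t) + ∫ t in Set.Ioi δ, h t|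
      ≤ (1/g) * (M * N.factorial * g ^ (N+1) + (C+D) * Real.exp (-δ/(2*g)) * (4*g)) := by
        refine mul_le_mul_of_nonneg_left ?_ (by positivity)
        calc |(∫ t in Set.Ioc (0:ℝ) δ, h t) + ∫ t in Set.Ioi δ, h t|
            ≤ |∫ t in Set.Ioc (0:ℝ) δ, h t| + |∫ t in Set.Ioi δ, h t| := abs_add_le _ _
          _ ≤ _ := add_le_add hbound1 hbound2
    _ = M * N.factorial * g ^ N + 4*(C+D) * Real.exp (-δ/(2*g)) := by
        rw [pow_succ]
        field_simp
    _ ≤ M * N.factorial * g ^ N + 4*(C+D) * (N.factorial * (2/δ)^N * g^N) := by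
        refine add_le_add le_rfl (mul_le_mul_of_nonneg_left hexp (by positivity))
    _ ≤ (M * N.factorial + 4*(C+D) * N.factorial * (2/δ)^N + 1) * g ^ N := by
        have hgN : (0:ℝ) < g ^ N := by positivity
        nlinarith
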